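/- The imaginary part of Tr(e^{i(λ+tν)} · e^{i(λ+sξ)}) has vanishing mixed second partial derivative ∂²/∂t∂s at (t,s)=(0,0), for any anti-Hermitian N×N matrices λ, ν, ξ. -/

import Mathlib

open Matrix

lemma herm_aux {N : ℕ} (l μ : Matrix (Fin N) (Fin N) ℂ)
    (hl : lᴴ = -l) (hμ : μᴴ = -μ) (t : ℝ) :
    (Complex.I • (l + t • μ))ᴴ = Complex.I • (l + t • μ) := by
  rw [conjTranspose_smul, conjTranspose_add, conjTranspose_smul, hl, hμ]
  simp [smul_smul]

/-- The imaginary part of `Tr(e^{i(λ+tν)} e^{i(λ+sξ)})` has vanishing mixed second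
partial derivative `∂²/∂t∂s` at `(0,0)`, for anti-Hermitian matrices `λ, ν, ξ`. -/
theorem stmt_1 {N : ℕ} (l ν ξ : Matrix (Fin N) (Fin N) ℂ)
    (hl : lᴴ = -l) (hν : νᴴ = -ν) (hξ : ξᴴ = -ξ) :
    deriv (fun t : ℝ => deriv (fun s : ℝ =>
      ((NormedSpace.exp (Complex.I • (l + t • ν)) *
        NormedSpace.exp (Complex.I • (l + s • ξ))).trace).im) 0) 0 = 0 := by
  have key : ∀ t s : ℝ,
      ((NormedSpace.exp (Complex.I • (l + t • ν)) *
        NormedSpace.exp (Complex.I • (l + s • ξ))).trace).im = 0 := by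
    intro t s
    set A := Complex.I • (l + t • ν) with hA
    set B := Complex.I • (l + s • ξ) with hB
    have hAh : (NormedSpace.exp A)ᴴ = NormedSpace.exp A := by
      rw [← Matrix.exp_conjTranspose, herm_aux l ν hl hν t]
    have hBh : (NormedSpace.exp B)ᴴ = NormedSpace.exp B := by
      rw [← Matrix.exp_conjTranspose, herm_aux l ξ hl hξ s]
    rw [← Complex.conj_eq_iff_im]
    calc (starRingEnd ℂ) ((NormedSpace.exp A * NormedSpace.exp B).trace)
        = ((NormedSpace.exp A * NormedSpace.exp B)ᴴ).trace := by
          rw [trace_conjTranspose]; rfl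
      _ = ((NormedSpace.exp B)ᴴ * (NormedSpace.exp A)ᴴ).trace := by
          rw [conjTranspose_mul]
      _ = (NormedSpace.exp B * NormedSpace.exp A).trace := by rw [hAh, hBh]
      _ = (NormedSpace.exp A * NormedSpace.exp B).trace := trace_mul_comm _ _
  have : (fun t : ℝ => deriv (fun s : ℝ =>
      ((NormedSpace.exp (Complex.I • (l + t • ν)) *
        NormedSpace.exp (Complex.I • (l + s • ξ))).trace).im) 0) = fun _ => 0 := by
    funext t
    have : (fun s : ℝ =>
        ((NormedSpace.exp (Complex.I • (l + t • ν)) *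
          NormedSpace.exp (Complex.I • (l + s • ξ))).trace).im) = fun _ => 0 := by
      funext s; exact key t s
    rw [this, deriv_const]
  rw [this, deriv_const]
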